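/- On the homogeneous tree 𝔗_b (b ≥ 2), the uncentred base maximal operator ℬ^u is unbounded on L^1: for a point o in a fixed horocycle ℌ_0, the function ℬ^u δ_o equals b^{−|x|/2} for x in ℌ_0 (where |x| = d(o,x)), and ∑_{x ∈ ℌ_0} ℬ^u δ_o(x) = ∞. -/

import Mathlib

open scoped ENNReal NNReal
open Set

/-- A locally finite tree presented via the data induced by a fixed geodesic ray `ω`:
a predecessor map `pred`, a height (Busemann) function `ht` increasing by one along `pred`,
finite successor sets, and connectedness (any two vertices have a common ancestor). -/
structure TreeData (V : Type*) where
  pred : V → V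
  ht : V → ℤ
  ht_pred : ∀ x, ht (pred x) = ht x + 1
  fiber_finite : ∀ x, {y | pred y = x}.Finite
  connected : ∀ x y, ∃ k l : ℕ, pred^[k] x = pred^[l] y

namespace TreeData

variable {V : Type*}

/-- The set of successors of a vertex. -/
def succs (t : TreeData V) (x : V) : Set V := {y | t.pred y = x}

/-- Every vertex has at least 3 neighbours, i.e. at least 2 successors. -/
def Thick (t : TreeData V) : Prop := ∀ x, 2 ≤ (t.succs x).ncard

/-- Homogeneous tree `𝔗_b`: every vertex has exactly `b+1` neighbours, i.e. `b` successors. -/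
def Homog (t : TreeData V) (b : ℕ) : Prop := ∀ x, (t.succs x).ncard = b

/-- The triangle with vertex `x` and height `R`: all descendants of `x` within `R` generations. -/
def tri (t : TreeData V) (x : V) (R : ℕ) : Set V := {y | ∃ j ≤ R, t.pred^[j] y = x}

/-- The base of the triangle with vertex `x` and height `R`: the `R`-fold successors of `x`. -/
def base (t : TreeData V) (x : V) (R : ℕ) : Set V := {y | t.pred^[R] y = x}

/-- The graph distance on the tree. -/
noncomputable def dist (t : TreeData V) (x y : V) : ℕ :=
  sInf {n | ∃ k l : ℕ, k + l = n ∧ t.pred^[k] x = t.pred^[l] y}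

/-- Number of points of a set, as an element of `ℝ≥0∞` (counting measure). -/
noncomputable def esize (E : Set V) : ℝ≥0∞ := ∑' _ : E, (1 : ℝ≥0∞)

/-- The average of `|f|` over a set, with respect to counting measure. -/
noncomputable def setAvg (t : TreeData V) (S : Set V) (f : V → ℝ) : ℝ≥0∞ :=
  (∑' y : S, (‖f y‖₊ : ℝ≥0∞)) / (S.ncard : ℝ≥0∞)

/-- The centred triangular maximal operator `𝒯`. -/
noncomputable def cmax (t : TreeData V) (f : V → ℝ) (x : V) : ℝ≥0∞ :=
  ⨆ R : ℕ, t.setAvg (t.tri x R) f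

/-- The uncentred triangular maximal operator `𝒰`. -/
noncomputable def umax (t : TreeData V) (f : V → ℝ) (x : V) : ℝ≥0∞ :=
  ⨆ (v : V) (R : ℕ) (_ : x ∈ t.tri v R), t.setAvg (t.tri v R) f

/-- The uncentred base maximal operator `ℬᵘ`. -/
noncomputable def ubmax (t : TreeData V) (f : V → ℝ) (x : V) : ℝ≥0∞ :=
  ⨆ (v : V) (R : ℕ) (_ : x ∈ t.tri v R), t.setAvg (t.base v R) f

/-- The modified triangle `T'_r(x) = T_r(x) ∪ {p^r(x)}`. -/
def mtri (t : TreeData V) (x : V) (r : ℕ) : Set V := t.tri x r ∪ {t.pred^[r] x}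

/-- The modified centred triangular maximal operator `𝒯'`. -/
noncomputable def cmax' (t : TreeData V) (f : V → ℝ) (x : V) : ℝ≥0∞ :=
  ⨆ r : ℕ, t.setAvg (t.mtri x r) f

/-- The modified uncentred triangular maximal operator `𝒰'`. -/
noncomputable def umax' (t : TreeData V) (f : V → ℝ) (x : V) : ℝ≥0∞ :=
  ⨆ (v : V) (r : ℕ) (_ : x ∈ t.mtri v r), t.setAvg (t.mtri v r) f

/-- The `ℓ^p` norm with respect to counting measure, for `p ∈ [1,∞]`. -/
noncomputable def eLp (p : ℝ≥0∞) (g : V → ℝ≥0∞) : ℝ≥0∞ :=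
  if p = ∞ then ⨆ v, g v else (∑' v, g v ^ p.toReal) ^ (1 / p.toReal)

/-- `|f|` as an `ℝ≥0∞`-valued function. -/
noncomputable def nn (f : V → ℝ) (x : V) : ℝ≥0∞ := (‖f x‖₊ : ℝ≥0∞)

/-- The point mass at `o`. -/
noncomputable def delta (o : V) : V → ℝ := ({o} : Set V).indicator fun _ => 1

end TreeData


namespace TreeData

attribute [local instance] Classical.propDecidable

variable {V : Type*}

lemma ht_iterate (t : TreeData V) (x : V) (k : ℕ) :
    t.ht (t.pred^[k] x) = t.ht x + k := by
  induction k with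
  | zero => simp
  | succ n ih =>
    rw [Function.iterate_succ_apply', t.ht_pred, ih]
    push_cast
    ring

lemma preimage_card (t : TreeData V) (b : ℕ) (hhom : t.Homog b) {S : Set V} (hS : S.Finite) :
    (t.pred ⁻¹' S).Finite ∧ (t.pred ⁻¹' S).ncard = b * S.ncard := by
  refine Set.Finite.induction_on
    (motive := fun S _ => (t.pred ⁻¹' S).Finite ∧ (t.pred ⁻¹' S).ncard = b * S.ncard) S hS
    (by simp) ?_
  · intro a S haS hSfin ih
    have hsuccfin : (t.succs a).Finite := t.fiber_finite a
    have hpre : t.pred ⁻¹' insert a S = t.succs a ∪ t.pred ⁻¹' S := by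
      ext y
      simp only [mem_preimage, mem_insert_iff, mem_union, succs, mem_setOf_eq]
    have hdisj : Disjoint (t.succs a) (t.pred ⁻¹' S) := by
      rw [Set.disjoint_left]
      intro y hy hy'
      exact haS (hy ▸ hy')
    refine ⟨by rw [hpre]; exact hsuccfin.union ih.1, ?_⟩
    rw [hpre, Set.ncard_union_eq hdisj hsuccfin ih.1, hhom a, ih.2,
      Set.ncard_insert_of_notMem haS hSfin]
    ring

lemma base_succ (t : TreeData V) (v : V) (R : ℕ) :
    t.base v (R + 1) = t.pred ⁻¹' (t.base v R) := by
  ext y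
  simp [base, Function.iterate_succ_apply]

lemma base_card (t : TreeData V) (b : ℕ) (hhom : t.Homog b) (v : V) (R : ℕ) :
    (t.base v R).Finite ∧ (t.base v R).ncard = b ^ R := by
  induction R with
  | zero =>
    have h : t.base v 0 = {v} := by ext y; simp [base]
    simp [h]
  | succ R ih =>
    rw [base_succ]
    obtain ⟨h1, h2⟩ := t.preimage_card b hhom ih.1
    exact ⟨h1, by rw [h2, ih.2, pow_succ]; ring⟩

lemma tsum_delta_subtype (o : V) (S : Set V) :
    (∑' y : S, (‖delta o y‖₊ : ℝ≥0∞)) = if o ∈ S then 1 else 0 := by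
  classical
  have hfun : ∀ y : V, (‖delta o y‖₊ : ℝ≥0∞) = if y = o then 1 else 0 := by
    intro y
    by_cases h : y = o <;> simp [delta, Set.indicator, h]
  by_cases hS : o ∈ S
  · rw [if_pos hS, tsum_eq_single (⟨o, hS⟩ : S)]
    · simp [hfun]
    · intro y hy
      rw [hfun, if_neg]
      exact fun h => hy (Subtype.ext h)
  · rw [if_neg hS]
    have h0 : ∀ y : S, (‖delta o y‖₊ : ℝ≥0∞) = 0 := by
      intro y
      rw [hfun, if_neg]
      rintro rfl
      exact hS y.2
    simp [h0]

lemma avg_base_delta (t : TreeData V) (b : ℕ) (hhom : t.Homog b) (o v : V) (R : ℕ) :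
    t.setAvg (t.base v R) (delta o)
      = if o ∈ t.base v R then ((b : ℝ≥0∞) ^ R)⁻¹ else 0 := by
  rw [setAvg, tsum_delta_subtype, (t.base_card b hhom v R).2]
  by_cases h : o ∈ t.base v R
  · rw [if_pos h, if_pos h]
    rw [ENNReal.div_eq_inv_mul]
    push_cast
    ring
  · rw [if_neg h, if_neg h, ENNReal.zero_div]

/-- lower bound for ubmax from a meeting level. -/
lemma ubmax_ge (t : TreeData V) (b : ℕ) (hhom : t.Homog b) (o x : V) (k : ℕ)
    (hk : t.pred^[k] x = t.pred^[k] o) :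
    ((b : ℝ≥0∞) ^ k)⁻¹ ≤ t.ubmax (delta o) x := by
  have hx : x ∈ t.tri (t.pred^[k] o) k := ⟨k, le_refl k, hk⟩
  have hval : t.setAvg (t.base (t.pred^[k] o) k) (delta o) = ((b : ℝ≥0∞) ^ k)⁻¹ := by
    rw [t.avg_base_delta b hhom o, if_pos]
    rfl
  calc ((b : ℝ≥0∞) ^ k)⁻¹ = t.setAvg (t.base (t.pred^[k] o) k) (delta o) := hval.symm
    _ ≤ t.ubmax (delta o) x :=
      le_iSup_of_le (t.pred^[k] o) (le_iSup_of_le k (le_iSup_of_le hx (le_refl _)))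

lemma meet_exists (t : TreeData V) (o x : V) (ho : t.ht o = 0) (hx : t.ht x = 0) :
    ∃ k : ℕ, t.pred^[k] x = t.pred^[k] o := by
  obtain ⟨k, l, hkl⟩ := t.connected x o
  have h1 := t.ht_iterate x k
  have h2 := t.ht_iterate o l
  rw [hkl, h2, ho, hx] at h1
  rw [zero_add, zero_add] at h1
  have hlk : k = l := by exact_mod_cast h1.symm
  subst hlk
  exact ⟨k, hkl⟩

lemma ubmax_eq (t : TreeData V) (b : ℕ) (hb : 2 ≤ b) (hhom : t.Homog b)
    (o x : V) (ho : t.ht o = 0) (hx : t.ht x = 0) :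
    t.ubmax (delta o) x = ((b : ℝ≥0∞) ^ sInf {k : ℕ | t.pred^[k] x = t.pred^[k] o})⁻¹ := by
  set M := {k : ℕ | t.pred^[k] x = t.pred^[k] o} with hM
  have hMne : M.Nonempty := t.meet_exists o x ho hx
  have hR0 : sInf M ∈ M := Nat.sInf_mem hMne
  apply le_antisymm
  · refine iSup_le fun v => iSup_le fun R => iSup_le fun hxtri => ?_
    rw [t.avg_base_delta b hhom o]
    by_cases ho' : o ∈ t.base v R
    · rw [if_pos ho']
      obtain ⟨j, hjR, hj⟩ := hxtri
      have hv : t.pred^[R] o = v := ho'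
      have h1 := t.ht_iterate x j
      have h2 := t.ht_iterate o R
      rw [hj, hx] at h1
      rw [hv, ho] at h2
      have hjR' : j = R := by omega
      subst hjR'
      have hmem : j ∈ M := by rw [hM]; exact hj.trans hv.symm
      have hle : sInf M ≤ j := Nat.sInf_le hmem
      have hb1 : (1 : ℝ≥0∞) ≤ (b : ℝ≥0∞) := by
        have h1b : (1 : ℕ) ≤ b := by omega
        exact_mod_cast h1b
      rw [ENNReal.inv_le_inv]
      exact pow_le_pow_right₀ hb1 hle
    · rw [if_neg ho']
      exact zero_le
  · exact t.ubmax_ge b hhom o x (sInf M) hR0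

lemma dist_eq (t : TreeData V) (o x : V) (ho : t.ht o = 0) (hx : t.ht x = 0) :
    t.dist o x = 2 * sInf {k : ℕ | t.pred^[k] x = t.pred^[k] o} := by
  set M := {k : ℕ | t.pred^[k] x = t.pred^[k] o} with hM
  have hMne : M.Nonempty := t.meet_exists o x ho hx
  have hR0 : sInf M ∈ M := Nat.sInf_mem hMne
  rw [dist]
  have hmemD : 2 * sInf M ∈ {n : ℕ | ∃ k l : ℕ, k + l = n ∧ t.pred^[k] o = t.pred^[l] x} :=
    ⟨sInf M, sInf M, by omega, hR0.symm⟩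
  apply le_antisymm
  · exact Nat.sInf_le hmemD
  · apply le_csInf ⟨2 * sInf M, hmemD⟩
    rintro n ⟨k, l, hkl, hpred⟩
    have h1 := t.ht_iterate o k
    have h2 := t.ht_iterate x l
    rw [hpred, h2, ho, hx] at h1
    rw [zero_add, zero_add] at h1
    have hkeq : k = l := by exact_mod_cast h1.symm
    subst hkeq
    have : sInf M ≤ k := Nat.sInf_le hpred.symm
    omega

end TreeData

/-- On `𝔗_b`, `ℬᵘδ_o(x) = b^{-|x|/2}` for `x` in the horocycle of `o`,
and `∑_{x ∈ ℌ_0} ℬᵘδ_o(x) = ∞`; hence `ℬᵘ` is unbounded on `L^1(𝔗_b)`. -/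
theorem stmt7 {V : Type*} (t : TreeData V) (b : ℕ) (hb : 2 ≤ b) (hhom : t.Homog b)
    (o : V) (ho : t.ht o = 0) :
    (∀ x, t.ht x = 0 →
        t.ubmax (TreeData.delta o) x = ((b : ℝ≥0∞) ^ (t.dist o x / 2))⁻¹) ∧
      ∑' x : {x | t.ht x = 0}, t.ubmax (TreeData.delta o) x = ∞ := by
  classical
  have hbne0 : (b : ℝ≥0∞) ≠ 0 := by
    simp only [ne_eq, Nat.cast_eq_zero]
    omega
  have hbnetop : (b : ℝ≥0∞) ≠ ∞ := ENNReal.natCast_ne_top b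
  constructor
  · intro x hx
    rw [t.ubmax_eq b hb hhom o x ho hx, t.dist_eq o x ho hx]
    have h2 : 2 * sInf {k : ℕ | t.pred^[k] x = t.pred^[k] o} / 2
        = sInf {k : ℕ | t.pred^[k] x = t.pred^[k] o} := by omega
    rw [h2]
  · -- divergence of the sum over the horocycle
    set A : Set V := {x | t.ht x = 0} with hA
    set g : V → ℝ≥0∞ := t.ubmax (TreeData.delta o) with hg
    -- shells
    set B : ℕ → Set V := fun n => t.base (t.pred^[n] o) n with hB
    have hBfin : ∀ n, (B n).Finite := fun n => (t.base_card b hhom _ n).1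
    have hBcard : ∀ n, (B n).ncard = b ^ n := fun n => (t.base_card b hhom _ n).2
    have hBsub : ∀ n, B n ⊆ B (n + 1) := by
      intro n y hy
      have hy' : t.pred^[n] y = t.pred^[n] o := hy
      show t.pred^[n+1] y = t.pred^[n+1] o
      rw [Function.iterate_succ_apply', Function.iterate_succ_apply', hy']
    have hBchain : ∀ k l, k ≤ l → B k ⊆ B l := by
      intro k l hkl
      induction l with
      | zero =>
        have : k = 0 := by omega
        subst this
        exact subset_rfl
      | succ l ih =>
        rcases Nat.lt_or_ge k (l + 1) with h | h
        · exact (ih (by omega)).trans (hBsub l)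
        · have : k = l + 1 := by omega
          subst this
          exact subset_rfl
    set sh : ℕ → Set V := fun n => B (n + 1) \ B n with hsh
    have hshfin : ∀ n, (sh n).Finite := fun n => (hBfin (n + 1)).diff
    have hshcard : ∀ n, b ^ n ≤ (sh n).ncard := by
      intro n
      have hcd : (sh n).ncard = b ^ (n + 1) - b ^ n := by
        rw [hsh]
        rw [Set.ncard_diff (hBsub n) (hBfin n), hBcard, hBcard]
      have hpow : 2 * b ^ n ≤ b ^ (n + 1) := by
        rw [pow_succ]
        calc 2 * b ^ n = b ^ n * 2 := by ring
          _ ≤ b ^ n * b := Nat.mul_le_mul_left _ hb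
      omega
    -- each point of shell n is in the horocycle and g is ≥ b⁻¹⁽ⁿ⁺¹⁾ there
    have hshA : ∀ n, ∀ x ∈ sh n, x ∈ A := by
      intro n x hxsh
      have hx1 : t.pred^[n+1] x = t.pred^[n+1] o := hxsh.1
      have h1 := t.ht_iterate x (n + 1)
      have h2 := t.ht_iterate o (n + 1)
      rw [hx1, h2, ho] at h1
      show t.ht x = 0
      omega
    have hshg : ∀ n, ∀ x ∈ sh n, ((b : ℝ≥0∞) ^ (n + 1))⁻¹ ≤ g x := by
      intro n x hxsh
      exact t.ubmax_ge b hhom o x (n + 1) hxsh.1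
    -- finset versions
    set shF : ℕ → Finset V := fun n => (hshfin n).toFinset with hshF
    have hdisjoint : ∀ m n : ℕ, m < n → Disjoint (sh m) (sh n) := by
      intro m n hmn
      rw [Set.disjoint_left]
      intro x hxm hxn
      exact hxn.2 (hBchain (m + 1) n hmn hxm.1)
    have key : ∀ N : ℕ, (N : ℝ≥0∞) * (b : ℝ≥0∞)⁻¹ ≤ ∑' x : A, g x := by
      intro N
      have hpd : Set.PairwiseDisjoint (↑(Finset.range N)) shF := by
        intro m _ n _ hmn
        have : Disjoint (sh m) (sh n) := by
          rcases Nat.lt_or_ge m n with h | h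
          · exact hdisjoint m n h
          · exact (hdisjoint n m (by omega)).symm
        simp only [Finset.disjoint_left]
        intro x hxm hxn
        rw [hshF, Set.Finite.mem_toFinset] at hxm hxn
        exact this.le_bot ⟨hxm, hxn⟩
      have step1 : ∑' x : A, g x = ∑' x : V, A.indicator g x := tsum_subtype A g
      have step2 : ∑ x ∈ (Finset.range N).biUnion shF, A.indicator g x
          ≤ ∑' x : V, A.indicator g x := ENNReal.sum_le_tsum _
      have step3 : ∑ x ∈ (Finset.range N).biUnion shF, A.indicator g x
          = ∑ n ∈ Finset.range N, ∑ x ∈ shF n, A.indicator g x :=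
        Finset.sum_biUnion hpd
      have step4 : ∀ n, (b : ℝ≥0∞)⁻¹ ≤ ∑ x ∈ shF n, A.indicator g x := by
        intro n
        have hterm : ∀ x ∈ shF n, ((b : ℝ≥0∞) ^ (n + 1))⁻¹ ≤ A.indicator g x := by
          intro x hx
          rw [hshF, Set.Finite.mem_toFinset] at hx
          rw [Set.indicator_of_mem (hshA n x hx)]
          exact hshg n x hx
        calc (b : ℝ≥0∞)⁻¹ = (b : ℝ≥0∞) ^ n * ((b : ℝ≥0∞) ^ (n + 1))⁻¹ := by
              rw [pow_succ, ENNReal.mul_inv (Or.inl (pow_ne_zero n hbne0))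
                (Or.inl (ENNReal.pow_ne_top hbnetop)), ← mul_assoc,
                ENNReal.mul_inv_cancel (pow_ne_zero n hbne0) (ENNReal.pow_ne_top hbnetop),
                one_mul]
          _ ≤ ((shF n).card : ℝ≥0∞) * ((b : ℝ≥0∞) ^ (n + 1))⁻¹ := by
              apply mul_le_mul_left
              have hc : b ^ n ≤ (shF n).card := by
                have := hshcard n
                rwa [Set.ncard_eq_toFinset_card _ (hshfin n)] at this
              exact_mod_cast Nat.cast_le.mpr hc
          _ = ∑ x ∈ shF n, ((b : ℝ≥0∞) ^ (n + 1))⁻¹ := by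
              rw [Finset.sum_const, nsmul_eq_mul]
          _ ≤ ∑ x ∈ shF n, A.indicator g x := Finset.sum_le_sum hterm
      calc (N : ℝ≥0∞) * (b : ℝ≥0∞)⁻¹ = ∑ _n ∈ Finset.range N, (b : ℝ≥0∞)⁻¹ := by
            rw [Finset.sum_const, nsmul_eq_mul, Finset.card_range]
        _ ≤ ∑ n ∈ Finset.range N, ∑ x ∈ shF n, A.indicator g x :=
            Finset.sum_le_sum fun n _ => step4 n
        _ = ∑ x ∈ (Finset.range N).biUnion shF, A.indicator g x := step3.symm
        _ ≤ ∑' x : V, A.indicator g x := step2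
        _ = ∑' x : A, g x := step1.symm
    -- conclude divergence
    have hNle : ∀ N : ℕ, (N : ℝ≥0∞) ≤ (∑' x : A, g x) * b := by
      intro N
      calc (N : ℝ≥0∞) = (N : ℝ≥0∞) * ((b : ℝ≥0∞)⁻¹ * b) := by
            rw [ENNReal.inv_mul_cancel hbne0 hbnetop, mul_one]
        _ = (N : ℝ≥0∞) * (b : ℝ≥0∞)⁻¹ * b := by ring
        _ ≤ (∑' x : A, g x) * b := mul_le_mul_left (key N) _
    have htop : (∑' x : A, g x) * b = ∞ := by
      apply top_unique
      rw [← ENNReal.iSup_natCast]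
      exact iSup_le hNle
    rcases ENNReal.mul_eq_top.mp htop with h | h
    · exact absurd h.2 hbnetop
    · exact h.1
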